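/- For any m ≥ 1, the ℂ-algebras ℂ[x,y,z₁,...,z_m]/⟨x(1+xy+z₁²+...+z_m²) - 1⟩ and ℂ[x,y,z₁,...,z_m]/⟨xy - 1⟩ are isomorphic. -/
import Mathlib

open MvPolynomial

noncomputable section Stmt12Aux

variable (m : ℕ)

def Spoly : MvPolynomial (Fin (m+2)) ℂ := ∑ i : Fin m, X i.succ.succ ^ 2
def fpoly : MvPolynomial (Fin (m+2)) ℂ := X 0 * (1 + X 0 * X 1 + Spoly m) - 1
def gpoly : MvPolynomial (Fin (m+2)) ℂ := X 0 * X 1 - 1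

def Phi0 : MvPolynomial (Fin (m+2)) ℂ →ₐ[ℂ] MvPolynomial (Fin (m+2)) ℂ :=
  aeval (Function.update X 1 (X 1 * (X 1 - 1 - Spoly m)))
def Psi0 : MvPolynomial (Fin (m+2)) ℂ →ₐ[ℂ] MvPolynomial (Fin (m+2)) ℂ :=
  aeval (Function.update X 1 (1 + X 0 * X 1 + Spoly m))

variable {m}

lemma ne01 : (0 : Fin (m+2)) ≠ 1 := by
  simp [Fin.ext_iff]

lemma nek1 (k : Fin m) : (k.succ.succ : Fin (m+2)) ≠ 1 := by
  simp [Fin.ext_iff]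

lemma Phi0_X0 : Phi0 m (X 0) = X 0 := by
  simp [Phi0, Function.update_of_ne ne01]

lemma Phi0_X1 : Phi0 m (X 1) = X 1 * (X 1 - 1 - Spoly m) := by
  simp [Phi0]

lemma Phi0_Xk (k : Fin m) : Phi0 m (X k.succ.succ) = X k.succ.succ := by
  simp [Phi0, Function.update_of_ne (nek1 k)]

lemma Phi0_S : Phi0 m (Spoly m) = Spoly m := by
  simp only [Spoly, map_sum, map_pow, Phi0_Xk]

lemma Psi0_X0 : Psi0 m (X 0) = X 0 := by
  simp [Psi0, Function.update_of_ne ne01]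

lemma Psi0_X1 : Psi0 m (X 1) = 1 + X 0 * X 1 + Spoly m := by
  simp [Psi0]

lemma Psi0_Xk (k : Fin m) : Psi0 m (X k.succ.succ) = X k.succ.succ := by
  simp [Psi0, Function.update_of_ne (nek1 k)]

lemma Psi0_S : Psi0 m (Spoly m) = Spoly m := by
  simp only [Spoly, map_sum, map_pow, Psi0_Xk]

lemma Psi0_g : Psi0 m (gpoly m) = fpoly m := by
  simp only [gpoly, fpoly, map_sub, map_mul, map_one, Psi0_X0, Psi0_X1]

lemma Phi0_f : Phi0 m (fpoly m) =
    gpoly m * (X 0 * X 1 + 1 - X 0 * (1 + Spoly m)) := by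
  simp only [fpoly, gpoly, map_sub, map_mul, map_add, map_one, Phi0_X0, Phi0_X1, Phi0_S]
  ring

lemma PhiPsi_X1 : Phi0 m (Psi0 m (X 1)) - X 1 = gpoly m * (X 1 - 1 - Spoly m) := by
  simp only [Psi0_X1, map_add, map_mul, map_one, Phi0_X0, Phi0_X1, Phi0_S, gpoly]
  ring

lemma PsiPhi_X1 : Psi0 m (Phi0 m (X 1)) - X 1 = X 1 * fpoly m := by
  simp only [Phi0_X1, map_mul, map_sub, map_one, Psi0_X0, Psi0_X1, Psi0_S, fpoly]
  ring

def I1 : Ideal (MvPolynomial (Fin (m+2)) ℂ) := Ideal.span {fpoly m}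
def I2 : Ideal (MvPolynomial (Fin (m+2)) ℂ) := Ideal.span {gpoly m}

lemma lift_aux1 : ∀ a ∈ (I1 : Ideal (MvPolynomial (Fin (m+2)) ℂ)),
    (Ideal.Quotient.mkₐ ℂ (I2 (m := m))).comp (Phi0 m) a = 0 := by
  intro a ha
  rw [I1, Ideal.mem_span_singleton] at ha
  obtain ⟨c, rfl⟩ := ha
  simp only [AlgHom.comp_apply, map_mul, Phi0_f, Ideal.Quotient.mkₐ_eq_mk]
  have h0 : Ideal.Quotient.mk (I2 (m := m)) (gpoly m) = 0 :=
    Ideal.Quotient.eq_zero_iff_mem.mpr (by rw [I2]; exact Ideal.subset_span rfl)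
  rw [h0, zero_mul, zero_mul]

lemma lift_aux2 : ∀ a ∈ (I2 : Ideal (MvPolynomial (Fin (m+2)) ℂ)),
    (Ideal.Quotient.mkₐ ℂ (I1 (m := m))).comp (Psi0 m) a = 0 := by
  intro a ha
  rw [I2, Ideal.mem_span_singleton] at ha
  obtain ⟨c, rfl⟩ := ha
  simp only [AlgHom.comp_apply, map_mul, Psi0_g, Ideal.Quotient.mkₐ_eq_mk]
  have h0 : Ideal.Quotient.mk (I1 (m := m)) (fpoly m) = 0 :=
    Ideal.Quotient.eq_zero_iff_mem.mpr (by rw [I1]; exact Ideal.subset_span rfl)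
  rw [h0, zero_mul]

def PhiQ : (MvPolynomial (Fin (m+2)) ℂ ⧸ (I1 : Ideal _)) →ₐ[ℂ]
    (MvPolynomial (Fin (m+2)) ℂ ⧸ (I2 : Ideal _)) :=
  Ideal.Quotient.liftₐ I1 ((Ideal.Quotient.mkₐ ℂ I2).comp (Phi0 m)) lift_aux1

def PsiQ : (MvPolynomial (Fin (m+2)) ℂ ⧸ (I2 : Ideal _)) →ₐ[ℂ]
    (MvPolynomial (Fin (m+2)) ℂ ⧸ (I1 : Ideal _)) :=
  Ideal.Quotient.liftₐ I2 ((Ideal.Quotient.mkₐ ℂ I1).comp (Psi0 m)) lift_aux2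

lemma PhiQ_mk (p : MvPolynomial (Fin (m+2)) ℂ) :
    PhiQ (Ideal.Quotient.mk I1 p) = Ideal.Quotient.mk I2 (Phi0 m p) := rfl

lemma PsiQ_mk (p : MvPolynomial (Fin (m+2)) ℂ) :
    PsiQ (Ideal.Quotient.mk I2 p) = Ideal.Quotient.mk I1 (Psi0 m p) := rfl

lemma comp1 : (PhiQ (m := m)).comp PsiQ = AlgHom.id ℂ _ := by
  apply Ideal.Quotient.algHom_ext
  apply MvPolynomial.algHom_ext
  intro i
  simp only [AlgHom.comp_apply, Ideal.Quotient.mkₐ_eq_mk, PsiQ_mk, PhiQ_mk, AlgHom.id_apply]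
  induction i using Fin.cases with
  | zero => rw [Psi0_X0, Phi0_X0]
  | succ j =>
    induction j using Fin.cases with
    | zero =>
      rw [show (Fin.succ 0 : Fin (m+2)) = 1 from rfl]
      rw [Ideal.Quotient.mk_eq_mk_iff_sub_mem, PhiPsi_X1]
      exact Ideal.mul_mem_right _ _ (Ideal.subset_span (Set.mem_singleton _))
    | succ k => rw [Psi0_Xk, Phi0_Xk]

lemma comp2 : (PsiQ (m := m)).comp PhiQ = AlgHom.id ℂ _ := by
  apply Ideal.Quotient.algHom_ext
  apply MvPolynomial.algHom_ext
  intro i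
  simp only [AlgHom.comp_apply, Ideal.Quotient.mkₐ_eq_mk, PsiQ_mk, PhiQ_mk, AlgHom.id_apply]
  induction i using Fin.cases with
  | zero => rw [Phi0_X0, Psi0_X0]
  | succ j =>
    induction j using Fin.cases with
    | zero =>
      rw [show (Fin.succ 0 : Fin (m+2)) = 1 from rfl]
      rw [Ideal.Quotient.mk_eq_mk_iff_sub_mem, PsiPhi_X1]
      exact Ideal.mul_mem_left _ _ (Ideal.subset_span (Set.mem_singleton _))
    | succ k => rw [Phi0_Xk, Psi0_Xk]

end Stmt12Aux

/-- for `m ≥ 1`,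
`ℂ[x,y,z₁,…,z_m]/⟨x(1+xy+z₁²+⋯+z_m²) - 1⟩ ≅ ℂ[x,y,z₁,…,z_m]/⟨xy - 1⟩`.
Variables: `X 0 = x`, `X 1 = y`, `X i.succ.succ = zᵢ`. -/
theorem stmt12 {m : ℕ} (hm : 1 ≤ m) :
    Nonempty
      ((MvPolynomial (Fin (m + 2)) ℂ ⧸
          Ideal.span {(X 0 * (1 + X 0 * X 1 + ∑ i : Fin m, X i.succ.succ ^ 2) - 1 :
            MvPolynomial (Fin (m + 2)) ℂ)}) ≃ₐ[ℂ]
       (MvPolynomial (Fin (m + 2)) ℂ ⧸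
          Ideal.span {(X 0 * X 1 - 1 : MvPolynomial (Fin (m + 2)) ℂ)})) := by
  exact ⟨AlgEquiv.ofAlgHom PhiQ PsiQ comp1 comp2⟩
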